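/- Write τ = v·b + ℓ with 0 ≤ ℓ < b (so v ≥ 1). Suppose t satisfies δ ≤ t ≤ (v−1)b, and write t = x·b + θ with 0 ≤ θ < b. If θ ≤ δ−1, then det(H([0:b−1],[t : t+b−1])) = ε · det(H([δ:b−1],[xb+δ : (x+1)b−1])) for some ε ∈ {1, −1}; in particular, H([0:b−1],[t : t+b−1]) is invertible over K. -/
import Mathlib


set_option linter.unusedVariables false

/-- The recursively defined 0/1 matrix `P^a_{u,v}`, given entrywise:
`Pmat a u v i j` is the `(i,j)` entry of `P^a_{u,v}`. -/
def Pmat (a u v i j : ℕ) : ℕ :=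
  if h1 : 0 < u ∧ u + a < v then
    if j < u then (if i = j then 1 else 0)
    else if j < u + a then 0
    else Pmat a u (v - u - a) i (j - u - a)
  else if h2 : 0 < v ∧ v < u then
    if i < v then (if i = j then 1 else 0)
    else Pmat a (u - v) v (i - v) j
  else
    if i = j ∧ j < u then 1 else 0
termination_by u + v
decreasing_by
  · omega
  · omega

/-- The parity-check matrix `H` of Construction 1, given entrywise (with `δ = b - a`):
`α·I_δ` in the top-left `δ×δ` corner, `P^a_{δ,τ-b}` in columns `[b:τ-1]` of the top `δ` rows,
`H(0,τ) = α`, `H(j,τ+j) = 1` for `j ∈ [1:δ]`, `I_a` in columns `[0:a-1]` of the bottom `a` rows,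
and `C` in columns `[a:τ]` of the bottom `a` rows; all other entries are `0`. -/
def Hmat {K : Type*} [Field K] (a b τ : ℕ) (α : K) (C : ℕ → ℕ → K) (i j : ℕ) : K :=
  if i < b - a then
    if j < b - a then (if i = j then α else 0)
    else if b ≤ j ∧ j < τ then (Pmat a (b - a) (τ - b) i (j - b) : K)
    else if j = τ then (if i = 0 then α else 0)
    else if τ + 1 ≤ j ∧ j ≤ τ + (b - a) then (if j = τ + i then 1 else 0)
    else 0
  else
    if j < a then (if i = (b - a) + j then 1 else 0)
    else if j ≤ τ then C (i - (b - a)) (j - a)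
    else if j = τ + (b - a) then (if i = b - a then 1 else 0)
    else 0

/-- Every square submatrix of the `m × n` matrix `C` (given entrywise) is invertible. -/
def allMinorsInvertible {K : Type*} [Field K] (C : ℕ → ℕ → K) (m n : ℕ) : Prop :=
  ∀ (k : ℕ) (I J : Fin k → ℕ), Function.Injective I → Function.Injective J →
    (∀ i, I i < m) → (∀ j, J j < n) →
    (Matrix.of fun i j : Fin k => C (I i) (J j)).det ≠ 0

lemma Pmat_pattern (a d : ℕ) (ha : 0 < a) (hd : 0 < d) :
    ∀ q W i r, r < d + a → q * (d + a) + d ≤ W →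
      Pmat a d W i (q * (d + a) + r) = if i = r ∧ r < d then 1 else 0 := by
  intro q
  induction q with
  | zero =>
    intro W i r hr hW
    simp only [Nat.zero_mul, Nat.zero_add] at hW ⊢
    rw [Pmat]
    by_cases h1 : 0 < d ∧ d + a < W
    · rw [dif_pos h1]
      by_cases hrd : r < d
      · rw [if_pos hrd]
        by_cases hir : i = r <;> simp [hir, hrd]
      · rw [if_neg hrd, if_pos (by omega)]
        simp [hrd]
    · rw [dif_neg h1, dif_neg (by omega)]
  | succ q ih =>
    intro W i r hr hW
    have hm : (q + 1) * (d + a) = q * (d + a) + (d + a) := by ring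
    rw [hm] at hW ⊢
    set Q := q * (d + a) with hQ
    rw [Pmat]
    rw [dif_pos ⟨hd, by omega⟩, if_neg (by omega), if_neg (by omega)]
    have hc : Q + (d + a) + r - d - a = Q + r := by omega
    rw [hc]
    exact ih (W - d - a) i r hr (by omega)

lemma Hmat_top {K : Type*} [Field K] (a b τ : ℕ) (α : K) (C : ℕ → ℕ → K) (i j : ℕ)
    (hi : i < b - a) (hj1 : b ≤ j) (hj2 : j < τ) :
    Hmat a b τ α C i j = (Pmat a (b - a) (τ - b) i (j - b) : K) := by
  rw [Hmat, if_pos hi, if_neg (by omega), if_pos ⟨hj1, hj2⟩]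

lemma Hmat_bot {K : Type*} [Field K] (a b τ : ℕ) (α : K) (C : ℕ → ℕ → K) (i j : ℕ)
    (hi : b - a ≤ i) (hj1 : a ≤ j) (hj2 : j ≤ τ) :
    Hmat a b τ α C i j = C (i - (b - a)) (j - a) := by
  rw [Hmat, if_neg (by omega), if_neg (by omega), if_pos hj2]

/-- case i, `θ ≤ δ-1`: write `τ = v·b + ℓ`, `0 ≤ ℓ < b`, and let
`δ ≤ t ≤ (v-1)·b` with `t = x·b + θ`, `0 ≤ θ < b`.  If `θ ≤ δ-1` then
`det H([0:b-1],[t:t+b-1]) = ε · det H([δ:b-1],[x·b+δ : (x+1)·b-1])` for some `ε ∈ {1,-1}`;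
in particular `H([0:b-1],[t:t+b-1])` is invertible over `K`. -/
theorem property_B2_case_i_small_theta {K : Type*} [Field K] (F : Subfield K) (a b τ : ℕ)
    (ha : 0 < a) (hab : a < b) (hbτ : b ≤ τ)
    (α : K) (hα : α ∉ F)
    (C : ℕ → ℕ → K) (hCF : ∀ i j, i < a → j < τ + 1 - a → C i j ∈ F)
    (hC : allMinorsInvertible C a (τ + 1 - a))
    (v ℓ : ℕ) (hτ : τ = v * b + ℓ) (hℓ : ℓ < b)
    (t x θ : ℕ) (ht1 : b - a ≤ t) (ht2 : t ≤ (v - 1) * b)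
    (htxθ : t = x * b + θ) (hθb : θ < b) (hθ : θ < b - a) :
    (∃ ε : K, (ε = 1 ∨ ε = -1) ∧
      (Matrix.of fun i j : Fin b => Hmat a b τ α C i.val (t + j.val)).det =
        ε * (Matrix.of fun i j : Fin a =>
              Hmat a b τ α C ((b - a) + i.val) (x * b + (b - a) + j.val)).det) ∧
    (Matrix.of fun i j : Fin b => Hmat a b τ α C i.val (t + j.val)).det ≠ 0 := by
  classical
  have hb0 : 0 < b := by omega
  have hd : 0 < b - a := by omega
  have hba' : b - a + a = b := by omega
  have hx1 : 1 ≤ x := by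
    rcases Nat.eq_zero_or_pos x with h | h
    · subst h; simp only [Nat.zero_mul, Nat.zero_add] at htxθ; omega
    · exact h
  have hv1 : 1 ≤ v := by
    rcases Nat.eq_zero_or_pos v with h | h
    · subst h; simp only [Nat.zero_mul, Nat.zero_add] at hτ; omega
    · exact h
  have hVL : v * b = (v - 1) * b + b := by
    calc v * b = ((v - 1) + 1) * b := by rw [Nat.sub_add_cancel hv1]
      _ = (v - 1) * b + b := by ring
  have hX1 : (x - 1) * b + b = x * b := by
    calc (x - 1) * b + b = ((x - 1) + 1) * b := by ring
      _ = x * b := by rw [Nat.sub_add_cancel hx1]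
  have hXb : b ≤ x * b := by
    calc b = 1 * b := (one_mul b).symm
      _ ≤ x * b := Nat.mul_le_mul_right b hx1
  have hxv : x ≤ v - 1 := by
    have hxb : x * b ≤ (v - 1) * b := by
      calc x * b ≤ x * b + θ := Nat.le_add_right _ _
        _ = t := htxθ.symm
        _ ≤ (v - 1) * b := ht2
    exact Nat.le_of_mul_le_mul_right hxb hb0
  have hXL : x * b ≤ (v - 1) * b := Nat.mul_le_mul_right b hxv
  have hXL2 : 1 ≤ θ → x * b + b ≤ (v - 1) * b := by
    intro h1
    have h2 : x * b < t := by rw [htxθ]; exact Nat.lt_add_of_pos_right h1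
    have h3 : x * b < (v - 1) * b := lt_of_lt_of_le h2 ht2
    have h4 : x < v - 1 := by
      by_contra h5
      push_neg at h5
      exact absurd (Nat.mul_le_mul_right b h5) (not_le.2 h3)
    calc x * b + b = (x + 1) * b := by ring
      _ ≤ (v - 1) * b := Nat.mul_le_mul_right b (by omega)
  set X := x * b with hX
  set X' := (x - 1) * b with hX'
  set L := (v - 1) * b with hL
  set V := v * b with hV
  -- the permutation
  let π : Equiv.Perm (Fin b) :=
    { toFun := fun k => ⟨(k.val + (b - θ)) % b, Nat.mod_lt _ hb0⟩
      invFun := fun k => ⟨(k.val + θ) % b, Nat.mod_lt _ hb0⟩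
      left_inv := by
        intro k
        apply Fin.ext
        simp only
        rw [Nat.mod_add_mod]
        have h1 : k.val + (b - θ) + θ = k.val + b := by omega
        rw [h1, Nat.add_mod_right, Nat.mod_eq_of_lt k.isLt]
      right_inv := by
        intro k
        apply Fin.ext
        simp only
        rw [Nat.mod_add_mod]
        have h1 : k.val + θ + (b - θ) = k.val + b := by omega
        rw [h1, Nat.add_mod_right, Nat.mod_eq_of_lt k.isLt] }
  have hπval : ∀ k : Fin b, (π k).val = (k.val + (b - θ)) % b := fun k => rfl
  have hmod1 : ∀ k : Fin b, θ ≤ k.val → (k.val + (b - θ)) % b = k.val - θ := by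
    intro k hk
    have hkb := k.isLt
    have h1 : k.val + (b - θ) = b + (k.val - θ) := by omega
    rw [h1, Nat.add_mod_left, Nat.mod_eq_of_lt (by omega)]
  have hmod2 : ∀ k : Fin b, k.val < θ → (k.val + (b - θ)) % b = k.val + (b - θ) := by
    intro k hk
    exact Nat.mod_eq_of_lt (by omega)
  set M : Matrix (Fin b) (Fin b) K :=
    Matrix.of fun i j : Fin b => Hmat a b τ α C i.val (t + j.val) with hM
  set Dm : Matrix (Fin a) (Fin a) K :=
    Matrix.of fun i j : Fin a => Hmat a b τ α C ((b - a) + i.val) (X + (b - a) + j.val) with hDm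
  -- entry computations
  have top_entry : ∀ i k : Fin b, (i : ℕ) < b - a →
      M i (π k) = if (i : ℕ) = (k : ℕ) ∧ (k : ℕ) < b - a then 1 else 0 := by
    intro i k hi
    have hkb := k.isLt
    rw [hM]
    simp only [Matrix.of_apply]
    rw [hπval]
    rcases Nat.lt_or_ge k.val θ with hk | hk
    · -- k < θ, column is X + b + k
      have hθ1 : 1 ≤ θ := by omega
      have hL2 := hXL2 hθ1
      rw [hmod2 k hk]
      rw [Hmat_top a b τ α C _ _ hi (by omega) (by omega)]
      have hcol : t + (k.val + (b - θ)) - b = x * ((b - a) + a) + k.val := by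
        rw [hba', ← hX]; omega
      rw [hcol, Pmat_pattern a (b - a) ha hd x (τ - b) i.val k.val (by omega)
        (by rw [hba', ← hX]; omega)]
      split_ifs <;> simp
    · -- θ ≤ k, column is X + k
      rw [hmod1 k hk]
      rw [Hmat_top a b τ α C _ _ hi (by omega) (by omega)]
      have hcol : t + (k.val - θ) - b = (x - 1) * ((b - a) + a) + k.val := by
        rw [hba', ← hX']; omega
      rw [hcol, Pmat_pattern a (b - a) ha hd (x - 1) (τ - b) i.val k.val (by omega)
        (by rw [hba', ← hX']; omega)]
      split_ifs <;> simp
  have bot_entry : ∀ i k : Fin b, b - a ≤ (i : ℕ) → θ ≤ (k : ℕ) →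
      M i (π k) = C ((i : ℕ) - (b - a)) (t + ((k : ℕ) - θ) - a) := by
    intro i k hi hk
    have hkb := k.isLt
    rw [hM]
    simp only [Matrix.of_apply]
    rw [hπval, hmod1 k hk]
    exact Hmat_bot a b τ α C _ _ hi (by omega) (by omega)
  -- block structure
  let e : Fin (b - a) ⊕ Fin a ≃ Fin b := finSumFinEquiv.trans (finCongr hba')
  have he1 : ∀ i : Fin (b - a), (e (Sum.inl i)).val = i.val := fun i => rfl
  have he2 : ∀ i : Fin a, (e (Sum.inr i)).val = (b - a) + i.val := fun i => rfl
  set B : Matrix (Fin a) (Fin (b - a)) K :=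
    Matrix.of fun i j => M (e (Sum.inr i)) (π (e (Sum.inl j))) with hB
  have hsub : (M.submatrix id π).submatrix e e = Matrix.fromBlocks 1 0 B Dm := by
    ext p q
    rcases p with i | i <;> rcases q with j | j <;>
      simp only [Matrix.submatrix_apply, id_eq, Matrix.fromBlocks_apply₁₁,
        Matrix.fromBlocks_apply₁₂, Matrix.fromBlocks_apply₂₁, Matrix.fromBlocks_apply₂₂]
    · -- top-left
      have h := top_entry (e (Sum.inl i)) (e (Sum.inl j)) (by rw [he1]; exact i.isLt)
      rw [he1, he1] at h
      rw [h, Matrix.one_apply]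
      by_cases hij : i = j
      · simp [hij, j.isLt]
      · have hv' : ¬ (i.val = j.val) := fun hh => hij (Fin.ext hh)
        simp [hij, hv']
    · -- top-right
      have h := top_entry (e (Sum.inl i)) (e (Sum.inr j)) (by rw [he1]; exact i.isLt)
      rw [he1, he2] at h
      rw [h, if_neg (by omega)]
      simp
    · -- bottom-left
      rw [hB]; simp only [Matrix.of_apply]
    · -- bottom-right
      have h := bot_entry (e (Sum.inr i)) (e (Sum.inr j)) (by rw [he2]; omega)
        (by rw [he2]; omega)
      rw [he2, he2] at h
      rw [h, hDm]
      simp only [Matrix.of_apply]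
      rw [Hmat_bot a b τ α C _ _ (by omega) (by omega) (by omega)]
      congr 1 <;> omega
  have hDet : Dm.det = ((Equiv.Perm.sign π : ℤ) : K) * M.det := by
    calc Dm.det = (Matrix.fromBlocks 1 0 B Dm).det := by
          rw [Matrix.det_fromBlocks_zero₁₂, Matrix.det_one, one_mul]
      _ = ((M.submatrix id π).submatrix e e).det := by rw [hsub]
      _ = (M.submatrix id π).det := Matrix.det_submatrix_equiv_self e _
      _ = ((Equiv.Perm.sign π : ℤ) : K) * M.det := Matrix.det_permute' π M
  have hDne : Dm.det ≠ 0 := by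
    have hDeq : Dm = Matrix.of (fun i j : Fin a => C i.val (X + (b - a) + j.val - a)) := by
      ext i j
      rw [hDm]
      simp only [Matrix.of_apply]
      rw [Hmat_bot a b τ α C _ _ (by omega) (by omega) (by omega)]
      congr 1
      omega
    rw [hDeq]
    refine hC a (fun i => i.val) (fun j => X + (b - a) + j.val - a)
      (fun i1 i2 h => Fin.ext h) ?_ (fun i => i.isLt) ?_
    · intro j1 j2 h
      simp only at h
      apply Fin.ext
      omega
    · intro j
      have hj := j.isLt
      show X + (b - a) + j.val - a < τ + 1 - a
      omega
  rcases Int.units_eq_one_or (Equiv.Perm.sign π) with hs | hs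
  · rw [hs] at hDet
    simp only [Units.val_one, Int.cast_one, one_mul] at hDet
    refine ⟨⟨1, Or.inl rfl, ?_⟩, ?_⟩
    · rw [one_mul, ← hDet]
    · intro h
      rw [h] at hDet
      exact hDne hDet
  · rw [hs] at hDet
    simp only [Units.val_neg, Units.val_one, Int.cast_neg, Int.cast_one, neg_one_mul] at hDet
    refine ⟨⟨-1, Or.inr rfl, ?_⟩, ?_⟩
    · rw [neg_one_mul, hDet, neg_neg]
    · intro h
      rw [h, neg_zero] at hDet
      exact hDne hDet
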